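/- arXiv:1905.08040 — 2 statements merged into one kernel-verified Lean document; each statement's English description precedes it below -/
import Mathlib

section
/- The triangular gauge d_φ is a pseudo-metric on Ω: for all a, b, c ∈ Ω one has d_φ(a,a) = 0, d_φ(a,b) = d_φ(b,a), and d_φ(a,c) ≤ d_φ(a,b) + d_φ(b,c). -/
open scoped BigOperators

/-- The set of weighted chain costs from `a` to `b`: a chain `a = c 0, c 1, …, c n = b`
with `n ≥ 1`, consecutive elements distinct (except that the single-edge chain `n = 1`
is always allowed, even when `a = b`), contributes the cost
`W n * ∑_{i<n} φ (c i) (c (i+1))`. -/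
def gaugeSet {Ω : Type*} (φ : Ω → Ω → ℝ) (W : ℕ → ℝ) (a b : Ω) : Set ℝ :=
  {x | ∃ n : ℕ, 1 ≤ n ∧ ∃ c : ℕ → Ω, c 0 = a ∧ c n = b ∧
    (n = 1 ∨ ∀ i < n, c i ≠ c (i + 1)) ∧
    x = W n * ∑ i ∈ Finset.range n, φ (c i) (c (i + 1))}

/-- The triangular gauge of the proximity function `φ` with weights `W`. -/
noncomputable def dGauge {Ω : Type*} (φ : Ω → Ω → ℝ) (W : ℕ → ℝ) (a b : Ω) : ℝ :=
  sInf (gaugeSet φ W a b)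

section Aux

variable {Ω : Type*} {φ : Ω → Ω → ℝ} {W : ℕ → ℝ}

lemma gaugeSet_nonempty (φ : Ω → Ω → ℝ) (W : ℕ → ℝ) (a b : Ω) :
    (gaugeSet φ W a b).Nonempty := by
  refine ⟨W 1 * ∑ i ∈ Finset.range 1,
      φ ((fun i => if i = 0 then a else b) i) ((fun i => if i = 0 then a else b) (i+1)),
    1, le_rfl, fun i => if i = 0 then a else b, by simp, by simp, Or.inl rfl, rfl⟩

lemma gaugeSet_nonneg (hφ : ∀ a b, 0 ≤ φ a b) (hW : ∀ i, 1 ≤ i → 0 < W i) (a b : Ω) :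
    ∀ x ∈ gaugeSet φ W a b, 0 ≤ x := by
  rintro x ⟨n, hn, c, -, -, -, rfl⟩
  exact mul_nonneg (hW n hn).le (Finset.sum_nonneg fun i _ => hφ _ _)

lemma gaugeSet_bddBelow (hφ : ∀ a b, 0 ≤ φ a b) (hW : ∀ i, 1 ≤ i → 0 < W i) (a b : Ω) :
    BddBelow (gaugeSet φ W a b) :=
  ⟨0, fun x hx => gaugeSet_nonneg hφ hW a b x hx⟩

lemma gaugeSet_symm_subset (hφ_symm : ∀ a b, φ a b = φ b a) (a b : Ω) :
    gaugeSet φ W a b ⊆ gaugeSet φ W b a := by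
  rintro x ⟨n, hn, c, h0, hnb, hd, rfl⟩
  refine ⟨n, hn, fun i => c (n - i), by simp [hnb], by simp [h0], ?_, ?_⟩
  · rcases hd with h1 | hd
    · exact Or.inl h1
    · refine Or.inr fun i hi heq => ?_
      have heq' : c (n - i) = c (n - (i + 1)) := heq
      have h := hd (n - i - 1) (by omega)
      have e1 : n - i - 1 + 1 = n - i := by omega
      rw [e1] at h
      have e2 : n - (i + 1) = n - i - 1 := by omega
      rw [e2] at heq'
      exact h heq'.symm
  · congr 1
    have hs : ∑ i ∈ Finset.range n, φ (c (n - i)) (c (n - (i + 1)))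
        = ∑ i ∈ Finset.range n, φ (c i) (c (i + 1)) := by
      calc ∑ i ∈ Finset.range n, φ (c (n - i)) (c (n - (i + 1)))
          = ∑ i ∈ Finset.range n, φ (c (n - 1 - i)) (c (n - 1 - i + 1)) := by
            refine Finset.sum_congr rfl fun i hi => ?_
            have hi' := Finset.mem_range.mp hi
            have e1 : n - (i + 1) = n - 1 - i := by omega
            have e2 : n - i = n - 1 - i + 1 := by omega
            rw [e1, e2, hφ_symm]
        _ = ∑ i ∈ Finset.range n, φ (c i) (c (i + 1)) :=
            Finset.sum_range_reflect (fun j => φ (c j) (c (j + 1))) n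
    show (∑ i ∈ Finset.range n, φ (c i) (c (i + 1)))
        = ∑ i ∈ Finset.range n, φ (c (n - i)) (c (n - (i + 1)))
    exact hs.symm

lemma dGauge_symm (hφ_symm : ∀ a b, φ a b = φ b a) (a b : Ω) :
    dGauge φ W a b = dGauge φ W b a := by
  unfold dGauge
  congr 1
  exact le_antisymm (gaugeSet_symm_subset hφ_symm a b) (gaugeSet_symm_subset hφ_symm b a)

lemma dGauge_self (hφ_nonneg : ∀ a b, 0 ≤ φ a b) (hφ_refl : ∀ a, φ a a = 0)
    (hW_pos : ∀ i, 1 ≤ i → 0 < W i) (a : Ω) :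
    dGauge φ W a a = 0 := by
  refine le_antisymm ?_ (Real.sInf_nonneg (gaugeSet_nonneg hφ_nonneg hW_pos a a))
  refine csInf_le (gaugeSet_bddBelow hφ_nonneg hW_pos a a) ?_
  exact ⟨1, le_rfl, fun _ => a, rfl, rfl, Or.inl rfl, by simp [hφ_refl]⟩

lemma dGauge_le_add (hφ_nonneg : ∀ a b, 0 ≤ φ a b)
    (hW_pos : ∀ i, 1 ≤ i → 0 < W i)
    (hW_antitone : ∀ i j, 1 ≤ i → i ≤ j → W j ≤ W i)
    {a b c : Ω} (hab : a ≠ b) (hbc : b ≠ c)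
    {x y : ℝ} (hx : x ∈ gaugeSet φ W a b) (hy : y ∈ gaugeSet φ W b c) :
    dGauge φ W a c ≤ x + y := by
  obtain ⟨n, hn, c₁, hc10, hc1n, hd1, rfl⟩ := hx
  obtain ⟨m, hm, c₂, hc20, hc2m, hd2, rfl⟩ := hy
  set d : ℕ → Ω := fun i => if i < n then c₁ i else c₂ (i - n) with hd_def
  have hdle : ∀ i ≤ n, d i = c₁ i := by
    intro i hi
    rcases lt_or_eq_of_le hi with h | h
    · simp [hd_def, h]
    · subst h
      simp [hd_def, hc1n, hc20]
  have hdge : ∀ j, d (n + j) = c₂ j := by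
    intro j
    simp [hd_def]
  have hsum : ∑ i ∈ Finset.range (n + m), φ (d i) (d (i + 1)) =
      (∑ i ∈ Finset.range n, φ (c₁ i) (c₁ (i + 1))) +
      ∑ i ∈ Finset.range m, φ (c₂ i) (c₂ (i + 1)) := by
    rw [Finset.sum_range_add]
    congr 1
    · refine Finset.sum_congr rfl fun i hi => ?_
      have hi' := Finset.mem_range.mp hi
      rw [hdle i (by omega), hdle (i + 1) (by omega)]
    · refine Finset.sum_congr rfl fun j hj => ?_
      have e : n + j + 1 = n + (j + 1) := by omega
      rw [e, hdge j, hdge (j + 1)]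
  have hmem : W (n + m) * ((∑ i ∈ Finset.range n, φ (c₁ i) (c₁ (i + 1))) +
      ∑ i ∈ Finset.range m, φ (c₂ i) (c₂ (i + 1))) ∈ gaugeSet φ W a c := by
    refine ⟨n + m, by omega, d, ?_, ?_, Or.inr ?_, by rw [hsum]⟩
    · rw [hdle 0 (by omega), hc10]
    · rw [hdge m, hc2m]
    · intro i hi
      rcases lt_or_ge i n with h | h
      · rw [hdle i (by omega), hdle (i + 1) (by omega)]
        rcases hd1 with h1 | hd1
        · subst h1
          have : i = 0 := by omega
          subst this
          rw [hc10, hc1n]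
          exact hab
        · exact hd1 i h
      · have h1 : d i = c₂ (i - n) := by
          have := hdge (i - n); rwa [show n + (i - n) = i by omega] at this
        have h2 : d (i + 1) = c₂ (i - n + 1) := by
          have := hdge (i - n + 1); rwa [show n + (i - n + 1) = i + 1 by omega] at this
        rw [h1, h2]
        rcases hd2 with h2 | hd2
        · subst h2
          have h0 : i - n = 0 := by omega
          rw [h0, hc20, show (0 : ℕ) + 1 = 1 from rfl, hc2m]
          exact hbc
        · exact hd2 (i - n) (by omega)
  have hbd := gaugeSet_bddBelow hφ_nonneg hW_pos a c
  refine le_trans (csInf_le hbd hmem) ?_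
  have hS1 : 0 ≤ ∑ i ∈ Finset.range n, φ (c₁ i) (c₁ (i + 1)) :=
    Finset.sum_nonneg fun i _ => hφ_nonneg _ _
  have hS2 : 0 ≤ ∑ i ∈ Finset.range m, φ (c₂ i) (c₂ (i + 1)) :=
    Finset.sum_nonneg fun i _ => hφ_nonneg _ _
  rw [mul_add]
  exact add_le_add
    (mul_le_mul_of_nonneg_right (hW_antitone n (n + m) hn (by omega)) hS1)
    (mul_le_mul_of_nonneg_right (hW_antitone m (n + m) hm (by omega)) hS2)

end Aux

/-- The triangular gauge `d_φ` is a pseudo-metric on `Ω`. -/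
theorem dGauge_pseudometric {Ω : Type*} [Nonempty Ω]
    (φ : Ω → Ω → ℝ) (W : ℕ → ℝ)
    (hφ_nonneg : ∀ a b, 0 ≤ φ a b)
    (hφ_symm : ∀ a b, φ a b = φ b a)
    (hφ_refl : ∀ a, φ a a = 0)
    (hW_pos : ∀ i, 1 ≤ i → 0 < W i)
    (hW_le_one : ∀ i, 1 ≤ i → W i ≤ 1)
    (hW_antitone : ∀ i j, 1 ≤ i → i ≤ j → W j ≤ W i) :
    ∀ a b c : Ω,
      dGauge φ W a a = 0 ∧
      dGauge φ W a b = dGauge φ W b a ∧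
      dGauge φ W a c ≤ dGauge φ W a b + dGauge φ W b c := by
  intro a b c
  refine ⟨dGauge_self hφ_nonneg hφ_refl hW_pos a, dGauge_symm hφ_symm a b, ?_⟩
  by_cases hab : a = b
  · subst hab
    rw [dGauge_self hφ_nonneg hφ_refl hW_pos a, zero_add]
  by_cases hbc : b = c
  · subst hbc
    rw [dGauge_self hφ_nonneg hφ_refl hW_pos b, add_zero]
  -- main case
  have key : ∀ x ∈ gaugeSet φ W a b, ∀ y ∈ gaugeSet φ W b c, dGauge φ W a c ≤ x + y :=
    fun x hx y hy => dGauge_le_add hφ_nonneg hW_pos hW_antitone hab hbc hx hy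
  show dGauge φ W a c ≤ sInf (gaugeSet φ W a b) + sInf (gaugeSet φ W b c)
  rw [← sub_le_iff_le_add]
  refine le_csInf (gaugeSet_nonempty φ W a b) fun x hx => ?_
  rw [sub_le_iff_le_add, ← sub_le_iff_le_add']
  refine le_csInf (gaugeSet_nonempty φ W b c) fun y hy => ?_
  rw [sub_le_iff_le_add']
  exact key x hx y hy
end

section
/- If Ω is finite, φ separates points (φ(a,b) = 0 if and only if a = b), and there is a constant Q > 0 such that 1/i ≤ Q·W_i for every i ≥ 1, then the triangular gauge d_φ is a metric on Ω; in particular d_φ(a,b) > 0 whenever a ≠ b. -/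
open scoped BigOperators

/-- If `Ω` is finite, `φ` separates points, and `1/i ≤ Q * W i` for all `i ≥ 1`,
then the triangular gauge `d_φ` is a metric on `Ω`; in particular `d_φ a b > 0`
whenever `a ≠ b`. -/
theorem dGauge_metric {Ω : Type*} [Fintype Ω] [Nonempty Ω]
    (φ : Ω → Ω → ℝ) (W : ℕ → ℝ)
    (hφ_nonneg : ∀ a b, 0 ≤ φ a b)
    (hφ_symm : ∀ a b, φ a b = φ b a)
    (hφ_sep : ∀ a b, φ a b = 0 ↔ a = b)
    (hW_pos : ∀ i, 1 ≤ i → 0 < W i)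
    (hW_le_one : ∀ i, 1 ≤ i → W i ≤ 1)
    (hW_antitone : ∀ i j, 1 ≤ i → i ≤ j → W j ≤ W i)
    (Q : ℝ) (hQ : 0 < Q)
    (hQW : ∀ i : ℕ, 1 ≤ i → 1 / (i : ℝ) ≤ Q * W i) :
    (∀ a b : Ω, dGauge φ W a b = 0 ↔ a = b) ∧
    (∀ a b : Ω, dGauge φ W a b = dGauge φ W b a) ∧
    (∀ a b c : Ω, dGauge φ W a c ≤ dGauge φ W a b + dGauge φ W b c) ∧
    (∀ a b : Ω, a ≠ b → 0 < dGauge φ W a b) := by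
  classical
  -- nonemptiness of gauge sets
  have hne : ∀ a b : Ω, (gaugeSet φ W a b).Nonempty := by
    intro a b
    refine ⟨W 1 * φ a b, 1, le_refl 1, (fun i => if i = 0 then a else b), by simp, by simp,
      Or.inl rfl, by simp⟩
  -- every element is nonnegative
  have hlb : ∀ a b : Ω, ∀ x ∈ gaugeSet φ W a b, (0:ℝ) ≤ x := by
    rintro a b x ⟨n, hn, c, h0, hnb, hd, rfl⟩
    exact mul_nonneg (hW_pos n hn).le (Finset.sum_nonneg fun i _ => hφ_nonneg _ _)
  have hbdd : ∀ a b : Ω, BddBelow (gaugeSet φ W a b) := fun a b => ⟨0, fun x hx => hlb a b x hx⟩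
  have hd_nonneg : ∀ a b : Ω, 0 ≤ dGauge φ W a b := fun a b => le_csInf (hne a b) (hlb a b)
  have hself : ∀ a : Ω, dGauge φ W a a = 0 := by
    intro a
    have h0 : (0:ℝ) ∈ gaugeSet φ W a a := by
      refine ⟨1, le_refl 1, fun _ => a, rfl, rfl, Or.inl rfl, ?_⟩
      simp [(hφ_sep a a).2 rfl]
    exact le_antisymm (csInf_le (hbdd a a) h0) (hd_nonneg a a)
  -- positivity
  have hpos : ∀ a b : Ω, a ≠ b → 0 < dGauge φ W a b := by
    intro a b hab
    set s : Finset (Ω × Ω) := Finset.univ.filter (fun p => p.1 ≠ p.2) with hs_def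
    have hs : s.Nonempty := ⟨(a,b), by simp [hs_def, hab]⟩
    set ε := s.inf' hs (fun p => φ p.1 p.2) with hε_def
    have hεpos : 0 < ε := by
      rw [hε_def, Finset.lt_inf'_iff]
      intro p hp
      have hpne : p.1 ≠ p.2 := by simpa [hs_def] using hp
      exact lt_of_le_of_ne (hφ_nonneg _ _) (fun h => hpne ((hφ_sep _ _).1 h.symm))
    have hεle : ∀ x y : Ω, x ≠ y → ε ≤ φ x y := by
      intro x y hxy
      exact Finset.inf'_le _ (show (x, y) ∈ s from Finset.mem_filter.2 ⟨Finset.mem_univ _, hxy⟩)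
    have key : ∀ x ∈ gaugeSet φ W a b, ε / Q ≤ x := by
      rintro x ⟨n, hn, c, h0, hnb, hd, rfl⟩
      have hdist : ∀ i < n, c i ≠ c (i+1) := by
        rcases hd with h1 | h
        · subst h1
          intro i hi
          interval_cases i
          rw [h0, hnb]; exact hab
        · exact h
      have hnpos : (0:ℝ) < (n:ℝ) := by exact_mod_cast hn
      have hsum : (n:ℝ) * ε ≤ ∑ i ∈ Finset.range n, φ (c i) (c (i+1)) := by
        calc (n:ℝ) * ε = ∑ _i ∈ Finset.range n, ε := by
              simp [mul_comm]
          _ ≤ _ := Finset.sum_le_sum fun i hi => hεle _ _ (hdist i (Finset.mem_range.1 hi))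
      have hQWn := hQW n hn
      have h1 : (1:ℝ) ≤ Q * W n * n := by
        have := mul_le_mul_of_nonneg_right hQWn hnpos.le
        rwa [one_div, inv_mul_cancel₀ hnpos.ne'] at this
      have hnW : 1 / Q ≤ (n:ℝ) * W n := by
        rw [div_le_iff₀ hQ]
        nlinarith
      calc ε / Q = (1/Q) * ε := by ring
        _ ≤ ((n:ℝ) * W n) * ε := mul_le_mul_of_nonneg_right hnW hεpos.le
        _ = W n * ((n:ℝ) * ε) := by ring
        _ ≤ W n * ∑ i ∈ Finset.range n, φ (c i) (c (i+1)) :=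
            mul_le_mul_of_nonneg_left hsum (hW_pos n hn).le
    have hinf := le_csInf (hne a b) key
    exact lt_of_lt_of_le (div_pos hεpos hQ) hinf
  -- symmetry
  have hsub : ∀ a b : Ω, gaugeSet φ W a b ⊆ gaugeSet φ W b a := by
    rintro a b x ⟨n, hn, c, h0, hnb, hd, rfl⟩
    refine ⟨n, hn, fun i => c (n - i), by simp [hnb], by simp [h0], ?_, ?_⟩
    · rcases hd with h1 | h
      · exact Or.inl h1
      · refine Or.inr fun i hi => ?_
        show c (n - i) ≠ c (n - (i+1))
        have h1' : n - (i+1) < n := by omega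
        have h2 : n - (i+1) + 1 = n - i := by omega
        have hne' := h (n - (i+1)) h1'
        rw [h2] at hne'
        exact fun hEq => hne' hEq.symm
    · have hrev : ∑ i ∈ Finset.range n, φ (c (n - i)) (c (n - (i+1))) =
          ∑ i ∈ Finset.range n, φ (c i) (c (i+1)) := by
        rw [← Finset.sum_range_reflect (fun j => φ (c j) (c (j+1))) n]
        refine Finset.sum_congr rfl fun i hi => ?_
        have hi' := Finset.mem_range.1 hi
        have h2 : n - 1 - i = n - (i+1) := by omega
        have h3 : n - (i+1) + 1 = n - i := by omega
        rw [h2, h3, hφ_symm]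
      rw [hrev]
  have hsymm : ∀ a b : Ω, dGauge φ W a b = dGauge φ W b a := by
    intro a b
    unfold dGauge
    rw [Set.Subset.antisymm (hsub a b) (hsub b a)]
  -- triangle inequality
  have htri : ∀ a b c : Ω, dGauge φ W a c ≤ dGauge φ W a b + dGauge φ W b c := by
    intro a b c
    by_cases hab : a = b
    · subst hab; rw [hself, zero_add]
    by_cases hbc : b = c
    · subst hbc; rw [hself, add_zero]
    have key : ∀ x ∈ gaugeSet φ W a b, ∀ y ∈ gaugeSet φ W b c, dGauge φ W a c ≤ x + y := by
      rintro x ⟨n, hn, c1, h10, h1n, hd1, rfl⟩ y ⟨m, hm, c2, h20, h2m, hd2, rfl⟩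
      have hdist1 : ∀ i < n, c1 i ≠ c1 (i+1) := by
        rcases hd1 with h1 | h
        · subst h1; intro i hi; interval_cases i; rw [h10, h1n]; exact hab
        · exact h
      have hdist2 : ∀ i < m, c2 i ≠ c2 (i+1) := by
        rcases hd2 with h1 | h
        · subst h1; intro i hi; interval_cases i; rw [h20, h2m]; exact hbc
        · exact h
      set c3 : ℕ → Ω := fun i => if i ≤ n then c1 i else c2 (i - n) with hc3
      have hc3eq1 : ∀ i ≤ n, c3 i = c1 i := by intro i hi; simp [hc3, hi]
      have hc3eq2 : ∀ i, n < i → c3 i = c2 (i - n) := by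
        intro i hi; simp [hc3, Nat.not_le.2 hi]
      have hS1 : (0:ℝ) ≤ ∑ i ∈ Finset.range n, φ (c1 i) (c1 (i+1)) :=
        Finset.sum_nonneg fun i _ => hφ_nonneg _ _
      have hS2 : (0:ℝ) ≤ ∑ i ∈ Finset.range m, φ (c2 i) (c2 (i+1)) :=
        Finset.sum_nonneg fun i _ => hφ_nonneg _ _
      have hmem : W (n+m) * (∑ i ∈ Finset.range n, φ (c1 i) (c1 (i+1)) +
          ∑ i ∈ Finset.range m, φ (c2 i) (c2 (i+1))) ∈ gaugeSet φ W a c := by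
        refine ⟨n + m, by omega, c3, ?_, ?_, Or.inr ?_, ?_⟩
        · rw [hc3eq1 0 (by omega)]; exact h10
        · rw [hc3eq2 (n+m) (by omega)]
          have : n + m - n = m := by omega
          rw [this]; exact h2m
        · intro i hi
          rcases lt_trichotomy i n with h | h | h
          · rw [hc3eq1 i (by omega), hc3eq1 (i+1) (by omega)]
            exact hdist1 i h
          · subst h
            rw [hc3eq1 i (le_refl i), hc3eq2 (i+1) (by omega)]
            have h01 : i + 1 - i = 1 := by omega
            rw [h01, h1n, ← h20]
            exact hdist2 0 (by omega)
          · rw [hc3eq2 i h, hc3eq2 (i+1) (by omega)]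
            have h4 : i + 1 - n = (i - n) + 1 := by omega
            rw [h4]
            exact hdist2 (i - n) (by omega)
        · congr 1
          rw [Finset.sum_range_add]
          congr 1
          · refine Finset.sum_congr rfl fun i hi => ?_
            have hi' := Finset.mem_range.1 hi
            rw [hc3eq1 i (by omega), hc3eq1 (i+1) (by omega)]
          · refine Finset.sum_congr rfl fun i hi => ?_
            have hi' := Finset.mem_range.1 hi
            have e2 : c3 (n + i + 1) = c2 (i + 1) := by
              rw [hc3eq2 (n+i+1) (by omega)]
              congr 1; omega
            rcases Nat.eq_zero_or_pos i with h0 | h0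
            · subst h0
              rw [e2, hc3eq1 (n+0) (by omega)]
              simp only [Nat.add_zero]
              rw [h1n, ← h20]
            · rw [e2, hc3eq2 (n+i) (by omega)]
              congr 2; omega
      have hle := csInf_le (hbdd a c) hmem
      refine hle.trans ?_
      have e1 : W (n+m) ≤ W n := hW_antitone n (n+m) hn (by omega)
      have e2 : W (n+m) ≤ W m := hW_antitone m (n+m) hm (by omega)
      have t1 := mul_le_mul_of_nonneg_right e1 hS1
      have t2 := mul_le_mul_of_nonneg_right e2 hS2
      rw [mul_add]
      linarith
    have h1 : ∀ x ∈ gaugeSet φ W a b, dGauge φ W a c - x ≤ dGauge φ W b c := by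
      intro x hx
      exact le_csInf (hne b c) fun y hy => by have := key x hx y hy; linarith
    have h2 : dGauge φ W a c - dGauge φ W b c ≤ dGauge φ W a b :=
      le_csInf (hne a b) fun x hx => by have := h1 x hx; linarith
    linarith
  refine ⟨?_, hsymm, htri, hpos⟩
  intro a b
  constructor
  · intro h
    by_contra hab
    exact (hpos a b hab).ne' h
  · rintro rfl
    exact hself a
end
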